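/- Let X be a locally convex space and g : X → ℝ ∪ {+∞} proper and convex with closed convex hull cl co g. If x ∈ dom g and ε > g(x) − (cl co g)(x) ≥ 0, then ∂_ε g(x) is nonempty; more precisely x* ∈ ∂_ε g(x) if and only if g*(x*) + g(x) − ⟨x*, x⟩ ≤ ε, and the infimum over x* of g*(x*) − ⟨x*, x⟩ + g(x) equals g(x) − (cl co g)(x). -/

import Mathlib

noncomputable section

variable {X : Type*} [AddCommGroup X] [Module ℝ X] [TopologicalSpace X]

/-- The Fenchel conjugate `g*(x*) = sup_x (⟨x*, x⟩ − g(x))` on the dual `X*` (weak*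
topology). -/
noncomputable def conj (g : X → EReal) : WeakDual ℝ X → EReal :=
  fun p => ⨆ y : X, ((p y : EReal) - g y)

/-- The biconjugate `g** = (g*)*`, which equals the closed convex hull `cl co g` by the
Fenchel–Moreau theorem. -/
noncomputable def clco (g : X → EReal) : X → EReal :=
  fun y => ⨆ p : WeakDual ℝ X, ((p y : EReal) - conj g p)

/-- If `g` is proper convex, `x ∈ dom g` and `ε > g(x) − (cl co g)(x) ≥ 0`, then `∂_ε g(x)` is
nonempty; moreover `x* ∈ ∂_ε g(x)` iff `g*(x*) + g(x) − ⟨x*, x⟩ ≤ ε`, and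
`inf_{x*} (g*(x*) − ⟨x*, x⟩ + g(x)) = g(x) − (cl co g)(x)`. -/
theorem epsSubdiff_nonempty_and_fenchel_characterization
    [IsTopologicalAddGroup X] [ContinuousSMul ℝ X] [LocallyConvexSpace ℝ X]
    (g : X → EReal)
    (hne_bot : ∀ y : X, g y ≠ ⊥) (hne_top : ∃ y : X, g y ≠ ⊤)
    (hconv : Convex ℝ {p : X × ℝ | g p.1 ≤ (p.2 : EReal)})
    (x : X) (hx : g x ≠ ⊤) (ε : ℝ)
    (h0 : (0 : EReal) ≤ g x - clco g x) (hε : g x - clco g x < (ε : EReal)) :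
    (∃ p : WeakDual ℝ X,
        ∀ y : X, ((p y - p x : ℝ) : EReal) ≤ g y - g x + (ε : EReal)) ∧
    (∀ p : WeakDual ℝ X,
        (∀ y : X, ((p y - p x : ℝ) : EReal) ≤ g y - g x + (ε : EReal)) ↔
          conj g p + g x - (p x : EReal) ≤ (ε : EReal)) ∧
    (⨅ p : WeakDual ℝ X, (conj g p - (p x : EReal) + g x)) = g x - clco g x := by
  obtain ⟨a, ha⟩ : ∃ a : ℝ, g x = (a : EReal) :=
    ⟨(g x).toReal, (EReal.coe_toReal hx (hne_bot x)).symm⟩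
  -- lower bound on the conjugate
  have hconj_lb : ∀ p : WeakDual ℝ X, ((p x - a : ℝ) : EReal) ≤ conj g p := by
    intro p
    have h := le_iSup (fun y => ((p y : EReal) - g y)) x
    rw [ha] at h
    simpa [conj] using h
  have hconj_bot : ∀ p : WeakDual ℝ X, conj g p ≠ ⊥ := by
    intro p h
    have h2 := hconj_lb p
    rw [h, le_bot_iff] at h2
    exact EReal.coe_ne_bot _ h2
  -- `p x - conj g p ≤ a` for every `p`
  have hs_le : ∀ p : WeakDual ℝ X, (p x : EReal) - conj g p ≤ (a : EReal) := by
    intro p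
    calc (p x : EReal) - conj g p ≤ (p x : EReal) - ((p x - a : ℝ) : EReal) :=
          EReal.sub_le_sub le_rfl (hconj_lb p)
      _ = (a : EReal) := by norm_cast; ring
  -- the Fenchel characterization of the ε-subdifferential
  have key : ∀ p : WeakDual ℝ X,
      (∀ y : X, ((p y - p x : ℝ) : EReal) ≤ g y - g x + (ε : EReal)) ↔
        conj g p + g x - (p x : EReal) ≤ (ε : EReal) := by
    intro p
    rw [ha]
    have h1 : (conj g p + (a : EReal) - (p x : EReal) ≤ (ε : EReal)) ↔
        conj g p ≤ ((ε + p x - a : ℝ) : EReal) := by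
      rw [EReal.sub_le_iff_le_add (Or.inl (EReal.coe_ne_bot _)) (Or.inl (EReal.coe_ne_top _)),
        ← EReal.le_sub_iff_add_le (Or.inl (EReal.coe_ne_bot _)) (Or.inl (EReal.coe_ne_top _))]
      norm_cast
    rw [h1, show conj g p = ⨆ y, ((p y : EReal) - g y) from rfl, iSup_le_iff]
    refine forall_congr' fun y => ?_
    rcases eq_or_ne (g y) ⊤ with hgy | hgy
    · simp [hgy]
    · obtain ⟨c, hc⟩ : ∃ c : ℝ, g y = (c : EReal) :=
        ⟨(g y).toReal, (EReal.coe_toReal hgy (hne_bot y)).symm⟩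
      rw [hc]
      norm_cast
      constructor <;> intro h <;> linarith
  -- `clco g x` is a real number
  have hSle : clco g x ≤ (a : EReal) := iSup_le hs_le
  have hStop : clco g x ≠ ⊤ := ne_top_of_le_ne_top (EReal.coe_ne_top a) hSle
  have hSbot : clco g x ≠ ⊥ := by
    intro h
    rw [ha, h, EReal.coe_sub_bot] at hε
    exact absurd hε (by simp)
  obtain ⟨t, ht⟩ : ∃ t : ℝ, clco g x = (t : EReal) :=
    ⟨(clco g x).toReal, (EReal.coe_toReal hStop hSbot).symm⟩
  -- rewriting the objective of the infimum
  have hfs : ∀ p : WeakDual ℝ X, conj g p - (p x : EReal) + g x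
      = (a : EReal) - ((p x : EReal) - conj g p) := by
    intro p
    rcases eq_or_ne (conj g p) ⊤ with h | h
    · rw [h, ha]
      simp
    · obtain ⟨c, hc⟩ : ∃ c : ℝ, conj g p = (c : EReal) :=
        ⟨(conj g p).toReal, (EReal.coe_toReal h (hconj_bot p)).symm⟩
      rw [hc, ha]
      norm_cast
      ring
  -- the value of the infimum
  have part3 : (⨅ p : WeakDual ℝ X, (conj g p - (p x : EReal) + g x)) = g x - clco g x := by
    simp only [hfs]
    rw [ha, ht]
    apply le_antisymm
    · have : ((a - t : ℝ) : EReal) = (a : EReal) - (t : EReal) := by norm_cast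
      rw [← this, ← EReal.le_of_forall_lt_iff_le]
      intro z hz
      have hz' : a - t < z := by exact_mod_cast hz
      have h2 : ((t - (z - (a - t)) : ℝ) : EReal) <
          ⨆ p : WeakDual ℝ X, ((p x : EReal) - conj g p) := by
        rw [show (⨆ p : WeakDual ℝ X, ((p x : EReal) - conj g p)) = ((t : ℝ) : EReal) from ht]
        exact_mod_cast sub_lt_self t (by linarith)
      rw [lt_iSup_iff] at h2
      obtain ⟨p, hp⟩ := h2
      refine iInf_le_of_le p ?_
      calc (a : EReal) - ((p x : EReal) - conj g p)
          ≤ (a : EReal) - ((t - (z - (a - t)) : ℝ) : EReal) := EReal.sub_le_sub le_rfl hp.le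
        _ = ((z : ℝ) : EReal) := by norm_cast; ring
    · refine le_iInf fun p => ?_
      refine EReal.sub_le_sub le_rfl ?_
      exact le_of_le_of_eq (le_iSup (fun p : WeakDual ℝ X => ((p x : EReal) - conj g p)) p) ht
  -- existence of an ε-subgradient
  have hlt : (⨅ p : WeakDual ℝ X, (conj g p - (p x : EReal) + g x)) < (ε : EReal) :=
    part3.le.trans_lt hε
  rw [iInf_lt_iff] at hlt
  obtain ⟨p, hp⟩ := hlt
  have hct : conj g p ≠ ⊤ := by
    intro h
    rw [hfs p, h, EReal.sub_top, EReal.sub_bot (EReal.coe_ne_bot a)] at hp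
    exact absurd hp (by simp)
  obtain ⟨c, hc⟩ : ∃ c : ℝ, conj g p = (c : EReal) :=
    ⟨(conj g p).toReal, (EReal.coe_toReal hct (hconj_bot p)).symm⟩
  refine ⟨⟨p, (key p).mpr ?_⟩, key, part3⟩
  rw [hc, ha] at hp ⊢
  have hp' : c - p x + a < ε := by exact_mod_cast hp
  have : (c + a - p x : ℝ) ≤ ε := by linarith
  exact_mod_cast this
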